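/- Surjectivity of the Vandermonde-plus-projection map: let F be a field, B a positive natural number, and let α_1, …, α_N ∈ F be pairwise distinct. For any subset S ⊆ [N] with |S| ≤ B, the linear map F^(2B) → F^S × F^B sending z = (z_1, …, z_{2B}) to ((Σ_{i=1}^{2B} α_n^{i−1} z_i)_{n∈S}, (z_{B+1}, …, z_{2B})) is surjective. -/

import Mathlib

/-- **Surjectivity of the Vandermonde-plus-projection map.**  For pairwise distinct
`α 0, …, α (N-1)` and any `S ⊆ [N]` with `|S| ≤ B`, the linear map `F^(2B) → F^S × F^B`
sending `z` to the masks `(Σ_i α_n^(i-1) z_i)_{n ∈ S}` together with the last `B`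
coordinates `(z_{B+1}, …, z_{2B})` of `z`, is surjective. -/
theorem vandermonde_plus_projection_surjective
    (F : Type*) [Field F] (B N : ℕ) (hB : 0 < B)
    (α : Fin N → F) (hα : Function.Injective α)
    (S : Finset (Fin N)) (hS : S.card ≤ B) :
    Function.Surjective (fun z : Fin (2*B) → F =>
      ((fun n : S => ∑ i : Fin (2*B), α n ^ (i : ℕ) * z i),
       (fun j : Fin B => z ⟨B + (j : ℕ), by have := j.isLt; omega⟩))) := by
  classical
  rintro ⟨c, w⟩
  -- target values for the interpolation polynomial
  set r : Fin N → F := fun n =>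
    (if h : n ∈ S then c ⟨n, h⟩ else 0) - ∑ j : Fin B, α n ^ (B + (j : ℕ)) * w j with hr
  set p : Polynomial F := Lagrange.interpolate S α r with hp
  have hinj : Set.InjOn α S := hα.injOn
  have hdeg : p.degree < (S.card : ℕ∞) := Lagrange.degree_interpolate_lt r hinj
  have hnatdeg : p.natDegree < B := by
    rcases eq_or_ne p 0 with h0 | h0
    · simpa [h0] using hB
    · have := (Polynomial.natDegree_lt_iff_degree_lt (n := B) h0).2
        (lt_of_lt_of_le hdeg (by exact Nat.cast_le.2 hS))
      exact this
  set zfun : ℕ → F := fun k =>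
    if k < B then p.coeff k else if h : k - B < B then w ⟨k - B, h⟩ else 0 with hz
  refine ⟨fun i => zfun (i : ℕ), ?_⟩
  have hproj : ∀ j : Fin B, zfun (B + (j : ℕ)) = w j := by
    intro j
    have h1 : ¬ (B + (j : ℕ) < B) := by omega
    have h2 : B + (j : ℕ) - B = (j : ℕ) := by omega
    simp [hz, h1, h2]
  refine Prod.ext ?_ ?_
  · funext n
    have hsum : ∑ i : Fin (2 * B), α n ^ (i : ℕ) * zfun (i : ℕ)
        = ∑ k ∈ Finset.range (2 * B), α n ^ k * zfun k :=
      Fin.sum_univ_eq_sum_range (fun k => α n ^ k * zfun k) (2 * B)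
    have hsplit : ∑ k ∈ Finset.range (2 * B), α n ^ k * zfun k
        = (∑ k ∈ Finset.range B, α n ^ k * zfun k)
          + ∑ j ∈ Finset.range B, α n ^ (B + j) * zfun (B + j) := by
      rw [two_mul]
      rw [Finset.sum_range_add]
    have h1 : ∑ k ∈ Finset.range B, α n ^ k * zfun k = p.eval (α (n : Fin N)) := by
      rw [Polynomial.eval_eq_sum_range' hnatdeg]
      refine Finset.sum_congr rfl fun k hk => ?_
      have : (k : ℕ) < B := Finset.mem_range.1 hk
      simp [hz, this, mul_comm]
    have h2 : ∑ j ∈ Finset.range B, α n ^ (B + j) * zfun (B + j)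
        = ∑ j : Fin B, α n ^ (B + (j : ℕ)) * w j := by
      rw [← Fin.sum_univ_eq_sum_range (fun j => α n ^ (B + j) * zfun (B + j)) B]
      exact Finset.sum_congr rfl fun j _ => by rw [hproj j]
    have heval : p.eval (α (n : Fin N)) = r n :=
      Lagrange.eval_interpolate_at_node r hinj n.2
    show ∑ i : Fin (2 * B), α (n : Fin N) ^ (i : ℕ) * zfun (i : ℕ) = c n
    rw [hsum, hsplit, h1, h2, heval]
    simp [hr, n.2]
  · funext j
    simpa using hproj j
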